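/- Let p be an odd prime and M ∈ GL₂(ZMod p) with p dividing the order of M. Then the characteristic polynomial of M has a double root a ∈ (ZMod p)ˣ with 2a = trace M, and M is conjugate in GL₂(ZMod p) to a matrix of the form !![a, b; 0, a] with b ≠ 0. In particular, the order of M divides p(p−1). -/

import Mathlib

open Polynomial Matrix

private lemma tri_pow' {R : Type*} [CommRing R] (a b : R) (n : ℕ) :
    (!![a, b; 0, a] : Matrix (Fin 2) (Fin 2) R) ^ (n+1)
      = !![a^(n+1), (n+1) * a^n * b; 0, a^(n+1)] := by
  induction n with
  | zero => simp
  | succ n ih =>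
    rw [pow_succ, ih, Matrix.mul_fin_two]
    apply Matrix.ext; intro i j
    fin_cases i <;> fin_cases j <;> (simp [pow_succ]; try ring)

private lemma charpoly_fin_two' {R : Type*} [CommRing R] (A : Matrix (Fin 2) (Fin 2) R) :
    A.charpoly = X^2 - C A.trace * X + C A.det := by
  rw [Matrix.charpoly, Matrix.det_fin_two, Matrix.trace_fin_two, Matrix.det_fin_two]
  simp [charmatrix_apply_eq, charmatrix_apply_ne]
  ring

theorem stmt5 (p : ℕ) [Fact p.Prime] (hp : Odd p) (M : GL (Fin 2) (ZMod p))
    (hord : p ∣ orderOf M) :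
    ∃ a : (ZMod p)ˣ,
      (M : Matrix (Fin 2) (Fin 2) (ZMod p)).charpoly = (X - C (a : ZMod p)) ^ 2
      ∧ 2 * (a : ZMod p) = (M : Matrix (Fin 2) (Fin 2) (ZMod p)).trace
      ∧ (∃ b : ZMod p, b ≠ 0 ∧ ∃ g : GL (Fin 2) (ZMod p),
          ((g * M * g⁻¹ : GL (Fin 2) (ZMod p)) : Matrix (Fin 2) (Fin 2) (ZMod p))
            = !![(a : ZMod p), b; 0, (a : ZMod p)])
      ∧ orderOf M ∣ p * (p - 1) := by
  have hpp : p.Prime := Fact.out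
  have hp1 : 1 < p := hpp.one_lt
  have hopos : 0 < orderOf M := orderOf_pos M
  set k := orderOf M / p with hk
  have hkp : k * p = orderOf M := Nat.div_mul_cancel hord
  have hk0 : 0 < k := by
    rcases Nat.eq_zero_or_pos k with h | h
    · rw [h] at hkp; omega
    · exact h
  set N := M ^ k with hN
  have hNp : N ^ p = 1 := by rw [hN, ← pow_mul, hkp, pow_orderOf_eq_one]
  have hN1 : N ≠ 1 := by
    intro h
    have h2 : orderOf M ∣ k := orderOf_dvd_of_pow_eq_one (hN ▸ h)
    have := Nat.le_of_dvd hk0 h2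
    have hklt : k < orderOf M := Nat.div_lt_self hopos hp1
    omega
  set A : Matrix (Fin 2) (Fin 2) (ZMod p) := (M : Matrix (Fin 2) (Fin 2) (ZMod p)) with hA
  set D : Matrix (Fin 2) (Fin 2) (ZMod p) := (N : Matrix (Fin 2) (Fin 2) (ZMod p)) - 1 with hD
  clear_value D
  have hD0 : D ≠ 0 := by
    intro h
    apply hN1
    exact Units.ext (by rwa [hD, sub_eq_zero] at h)
  have hDp : D ^ p = 0 := by
    have hc : Commute ((N : Matrix (Fin 2) (Fin 2) (ZMod p))) 1 := Commute.one_right _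
    rw [hD, sub_pow_char_of_commute (p := p) hc, ← Units.val_pow_eq_pow_val, hNp, Units.val_one,
      one_pow, sub_self]
  have hnil : IsNilpotent D := ⟨p, hDp⟩
  have htr : D.trace = 0 := (Matrix.isNilpotent_trace_of_isNilpotent hnil).eq_zero
  have hdet : D.det = 0 := by
    have h1 : D.det ^ p = 0 := by rw [← Matrix.det_pow, hDp, Matrix.det_zero]
    exact pow_eq_zero_iff hpp.ne_zero |>.mp h1
  have hD2 : D ^ 2 = 0 := by
    have h := Matrix.aeval_self_charpoly D
    rw [charpoly_fin_two' D, htr, hdet] at h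
    simpa using h
  have htr2 : D 1 1 = - D 0 0 := by
    rw [Matrix.trace_fin_two] at htr; linear_combination htr
  have hdet2 : D 0 0 * D 0 0 + D 0 1 * D 1 0 = 0 := by
    rw [Matrix.det_fin_two, htr2] at hdet; linear_combination -hdet
  set E : Matrix (Fin 2) (Fin 2) (ZMod p) := !![0,1;0,0] with hE
  obtain ⟨h, hhdet, hDh⟩ : ∃ h : Matrix (Fin 2) (Fin 2) (ZMod p),
      IsUnit h.det ∧ D * h = h * E := by
    by_cases hz : D 1 0 = 0
    · have hx : D 0 0 = 0 := by
        have h2 : D 0 0 * D 0 0 = 0 := by rw [hz] at hdet2; linear_combination hdet2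
        exact pow_eq_zero_iff (n := 2) (by norm_num) |>.mp (by rw [sq]; exact h2)
      have hy : D 0 1 ≠ 0 := by
        intro hy
        apply hD0
        rw [eta_fin_two D, hx, hy, hz, htr2, hx]
        apply Matrix.ext; intro i j
        fin_cases i <;> fin_cases j <;> simp
      refine ⟨!![D 0 1, 0; 0, 1], ?_, ?_⟩
      · rw [Matrix.det_fin_two_of]; simpa using hy
      · rw [eta_fin_two D, hx, hz, htr2, hx, hE, Matrix.mul_fin_two, Matrix.mul_fin_two]
        rw [← Matrix.ext_iff]
        simp only [Fin.forall_fin_two]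
        norm_num
    · refine ⟨!![D 0 0, 1; D 1 0, 0], ?_, ?_⟩
      · rw [Matrix.det_fin_two_of]; simpa using hz
      · rw [eta_fin_two D, htr2, hE, Matrix.mul_fin_two, Matrix.mul_fin_two]
        rw [← Matrix.ext_iff]
        simp only [Fin.forall_fin_two]
        norm_num
        constructor
        · linear_combination hdet2
        · ring
  have hu : IsUnit h := (Matrix.isUnit_iff_isUnit_det h).mpr hhdet
  set u : GL (Fin 2) (ZMod p) := hu.unit with hu'
  have huv : (u : Matrix (Fin 2) (Fin 2) (ZMod p)) = h := hu.unit_spec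
  set g : GL (Fin 2) (ZMod p) := u⁻¹ with hg
  set P : Matrix (Fin 2) (Fin 2) (ZMod p) :=
    ((g * M * g⁻¹ : GL (Fin 2) (ZMod p)) : Matrix (Fin 2) (Fin 2) (ZMod p)) with hP
  have hP' : P = (u⁻¹ : GL (Fin 2) (ZMod p)) * A * (u : GL (Fin 2) (ZMod p)) := by
    rw [hP, hg, inv_inv]
    simp [Units.val_mul, hA]
  have hMD : Commute A D := by
    have h1 : Commute A ((N : Matrix (Fin 2) (Fin 2) (ZMod p))) := by
      rw [hN]
      exact ((Commute.refl M).pow_right k).units_val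
    rw [hD]
    exact h1.sub_right (Commute.one_right _)
  have hEconj : E = (u⁻¹ : GL (Fin 2) (ZMod p)) * D * (u : GL (Fin 2) (ZMod p)) := by
    rw [← huv] at hDh
    calc E = ((u⁻¹ : GL (Fin 2) (ZMod p)) : Matrix (Fin 2) (Fin 2) (ZMod p)) * ↑u * E := by
          rw [Units.inv_mul, one_mul]
      _ = ↑u⁻¹ * (D * ↑u) := by rw [mul_assoc, ← hDh]
      _ = _ := by rw [mul_assoc]
  have hPE : P * E = E * P := by
    rw [hP', hEconj]
    have key : A * D = D * A := hMD
    simp only [mul_assoc, Units.mul_inv_cancel_left]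
    rw [← mul_assoc A, ← mul_assoc D, key]
  have hP10 : P 1 0 = 0 := by
    have h2 := congrFun (congrFun hPE 0) 0
    simpa [Matrix.mul_apply, Fin.sum_univ_two, hE] using h2.symm
  have hP11 : P 1 1 = P 0 0 := by
    have h2 := congrFun (congrFun hPE 0) 1
    simpa [Matrix.mul_apply, Fin.sum_univ_two, hE] using h2.symm
  have hPeta : P = !![P 0 0, P 0 1; 0, P 0 0] := by
    conv_lhs => rw [eta_fin_two P]
    rw [hP10, hP11]
  have hdetP : A.det = P 0 0 * P 0 0 := by
    have h2 : P.det = A.det := by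
      rw [hP']
      have := Matrix.det_units_conj (u⁻¹ : GL (Fin 2) (ZMod p)) A
      rwa [inv_inv] at this
    rw [← h2]
    conv_lhs => rw [hPeta]
    rw [Matrix.det_fin_two_of]; ring
  have haU : IsUnit A.det := (Matrix.isUnit_iff_isUnit_det A).mp (Units.isUnit M)
  have ha0 : P 0 0 ≠ 0 := by
    intro h0
    rw [hdetP, h0, mul_zero] at haU
    exact haU.ne_zero rfl
  have htrP : A.trace = P 0 0 + P 0 0 := by
    have h2 : P.trace = A.trace := by
      rw [hP']
      have := Matrix.trace_units_conj (u⁻¹ : GL (Fin 2) (ZMod p)) A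
      rwa [inv_inv] at this
    rw [← h2, Matrix.trace_fin_two, hP11]
  have haunit : IsUnit (P 0 0) := isUnit_iff_ne_zero.mpr ha0
  -- the three power statements
  have conj_transfer : ∀ n : ℕ, P ^ n = 1 → M ^ n = 1 := by
    intro n hn
    have h3 : (g * M * g⁻¹) ^ n = 1 := by
      apply Units.ext
      rw [Units.val_pow_eq_pow_val, ← hP, hn, Units.val_one]
    rw [conj_pow] at h3
    calc M ^ n = g⁻¹ * (g * M ^ n * g⁻¹) * g := by group
      _ = 1 := by rw [h3]; group
  have hbne : P 0 1 ≠ 0 := by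
    intro hb0
    have hpow : P ^ (p - 1) = 1 := by
      obtain ⟨m, hm⟩ : ∃ m, p - 1 = m + 1 := ⟨p - 2, by omega⟩
      rw [hPeta, hb0, hm, tri_pow']
      have h5 : P 0 0 ^ (m+1) = 1 := by
        rw [← hm]; exact ZMod.pow_card_sub_one_eq_one ha0
      rw [mul_zero, h5]
      exact Matrix.one_fin_two.symm
    have hdvd : orderOf M ∣ p - 1 := orderOf_dvd_of_pow_eq_one (conj_transfer _ hpow)
    have := Nat.le_of_dvd (by omega) (dvd_trans hord hdvd)
    omega
  have hfinal : orderOf M ∣ p * (p - 1) := by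
    apply orderOf_dvd_of_pow_eq_one
    apply conj_transfer
    have hpos : 0 < p * (p - 1) := Nat.mul_pos (by omega) (by omega)
    obtain ⟨m, hm⟩ : ∃ m, p * (p - 1) = m + 1 := ⟨p * (p-1) - 1, by omega⟩
    rw [hPeta, hm, tri_pow']
    have h5 : P 0 0 ^ (m+1) = 1 := by
      rw [← hm, mul_comm, pow_mul, ZMod.pow_card_sub_one_eq_one ha0, one_pow]
    have h6 : ((m : ZMod p) + 1) = 0 := by
      have h7 := congrArg (Nat.cast : ℕ → ZMod p) hm
      push_cast at h7
      simp only [ZMod.natCast_self, zero_mul] at h7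
      linear_combination -h7
    rw [h5, h6, zero_mul, zero_mul]
    exact Matrix.one_fin_two.symm
  refine ⟨haunit.unit, ?_, ?_, ⟨P 0 1, hbne, g, ?_⟩, hfinal⟩
  · rw [haunit.unit_spec, charpoly_fin_two' A, htrP, hdetP]
    simp only [C_add, C_mul]
    ring
  · rw [haunit.unit_spec, htrP]; ring
  · show P = _
    conv_lhs => rw [hPeta]
    rw [haunit.unit_spec]
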